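/- Let N > 1 and M > 2 be integers, and define f(m') = (m'+1)(N^{M-m'-1} - 1) - (M N / (M + N - 1)) (N^{M-1} - 1) for integers m' with 1 ≤ m' ≤ M - 2. Then f is strictly decreasing in m' (i.e., f(m'+1) < f(m') whenever both are defined) and f(m') < 0 for all m' in [1, M-2]. -/

import Mathlib

theorem stmt_7 (N M : ℕ) (hN : 1 < N) (hM : 2 < M) :
    (∀ m' : ℕ, 1 ≤ m' → m' + 1 ≤ M - 2 →
      ((m' + 1 : ℕ) + 1 : ℝ) * ((N : ℝ) ^ (M - (m' + 1) - 1) - 1) -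
          ((M : ℝ) * N / ((M : ℝ) + N - 1)) * ((N : ℝ) ^ (M - 1) - 1) <
        ((m' : ℝ) + 1) * ((N : ℝ) ^ (M - m' - 1) - 1) -
          ((M : ℝ) * N / ((M : ℝ) + N - 1)) * ((N : ℝ) ^ (M - 1) - 1)) ∧
    (∀ m' : ℕ, 1 ≤ m' → m' ≤ M - 2 →
      ((m' : ℝ) + 1) * ((N : ℝ) ^ (M - m' - 1) - 1) -
          ((M : ℝ) * N / ((M : ℝ) + N - 1)) * ((N : ℝ) ^ (M - 1) - 1) < 0) := by
  have hN2 : (2 : ℝ) ≤ (N : ℝ) := by exact_mod_cast hN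
  constructor
  · intro m' h1 h2
    apply sub_lt_sub_right
    set a := M - m' - 2 with ha
    have e1 : M - (m' + 1) - 1 = a := by omega
    have e2 : M - m' - 1 = a + 1 := by omega
    rw [e1, e2, pow_succ]
    have hx : (1 : ℝ) ≤ (N : ℝ) ^ a := one_le_pow₀ (by linarith)
    have hm : (1 : ℝ) ≤ (m' : ℝ) := by exact_mod_cast h1
    push_cast
    nlinarith [mul_le_mul_of_nonneg_left hN2 (by positivity : (0:ℝ) ≤ (N:ℝ)^a)]
  · intro m' h1 h2
    set k := M - m' - 1 with hk
    have hk1 : 1 ≤ k := by omega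
    have e1 : M - 1 = m' + k := by omega
    rw [e1, pow_add]
    rw [sub_neg]
    have hc : (1 : ℝ) < (M : ℝ) * N / ((M : ℝ) + N - 1) := by
      rw [lt_div_iff₀ (by push_cast; nlinarith [hM.le, hN.le] : (0:ℝ) < (M:ℝ) + N - 1)]
      have hM3 : (3 : ℝ) ≤ (M : ℝ) := by exact_mod_cast hM
      nlinarith
    have hp : ((m' : ℝ) + 1) ≤ (N : ℝ) ^ m' := by
      calc ((m' : ℝ) + 1) ≤ (2 : ℝ) ^ m' := by
            have := @Nat.lt_two_pow_self m'
            have : (m' : ℝ) + 1 ≤ ((2 : ℕ) : ℝ) ^ m' := by exact_mod_cast this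
            simpa using this
        _ ≤ (N : ℝ) ^ m' := pow_le_pow_left₀ (by norm_num) hN2 m'
    have hq : (2 : ℝ) ≤ (N : ℝ) ^ k := by
      calc (2 : ℝ) = 2 ^ 1 := by norm_num
        _ ≤ (2 : ℝ) ^ k := pow_le_pow_right₀ (by norm_num) hk1
        _ ≤ (N : ℝ) ^ k := pow_le_pow_left₀ (by norm_num) hN2 k
    have hNm : (2 : ℝ) ≤ (N : ℝ) ^ m' := by
      calc (2 : ℝ) = 2 ^ 1 := by norm_num
        _ ≤ (2 : ℝ) ^ m' := pow_le_pow_right₀ (by norm_num) h1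
        _ ≤ (N : ℝ) ^ m' := pow_le_pow_left₀ (by norm_num) hN2 m'
    have hB : (0 : ℝ) < (N : ℝ) ^ m' * (N : ℝ) ^ k - 1 := by nlinarith
    have hAB : ((m' : ℝ) + 1) * ((N : ℝ) ^ k - 1) < (N : ℝ) ^ m' * (N : ℝ) ^ k - 1 := by
      nlinarith [mul_le_mul_of_nonneg_right hp (by linarith : (0:ℝ) ≤ (N:ℝ)^k - 1)]
    calc ((m' : ℝ) + 1) * ((N : ℝ) ^ k - 1) < (N : ℝ) ^ m' * (N : ℝ) ^ k - 1 := hAB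
      _ < ((M : ℝ) * N / ((M : ℝ) + N - 1)) * ((N : ℝ) ^ m' * (N : ℝ) ^ k - 1) := by
          nlinarith
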